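/- Let n ≥ 1, α ∈ (1, 2), and γ ∈ (0, 1). There exists a constant C = C(n, α, γ) > 0 such that for every bounded C¹ function ρ : ℝⁿ → ℝ with bounded gradient and finite γ-Hölder seminorm [ρ]_γ := sup_{x≠y} |ρ(x) − ρ(y)|/|x−y|^γ, every x ∈ ℝⁿ and every r ∈ (0, 1): | ∫_{|z|>r} (z / |z|^{n+α}) · ∇ρ(x+z) dz | ≤ C ( ‖∇ρ‖_∞ + (‖ρ‖_∞ + [ρ]_γ) r^{γ−α} ). -/

import Mathlib

open MeasureTheory Set Filter Metric
open scoped RealInnerProductSpace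


lemma oneD {α γ H G r : ℝ} (hα1 : 1 < α) (hγ0 : 0 < γ) (hγα : γ < α)
    (hr : 0 < r) (f f' : ℝ → ℝ)
    (hderiv : ∀ t, 0 < t → HasDerivAt f (f' t) t)
    (hfH : ∀ t, 0 < t → |f t| ≤ H * t ^ γ)
    (hfG : ∀ t, |f' t| ≤ G)
    (hf'c : Continuous f') :
    |∫ t in Ioi r, t ^ (-α) * f' t| ≤ (1 + α / (α - γ)) * H * r ^ (γ - α) := by
  have hH : 0 ≤ H := by
    have := hfH 1 one_pos
    have h1 : (1:ℝ) ^ γ = 1 := Real.one_rpow γ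
    nlinarith [abs_nonneg (f 1)]
  have hαγ : 0 < α - γ := by linarith
  -- integrability of B
  have hintB : IntegrableOn (fun t => t ^ (-α) * f' t) (Ioi r) := by
    have hbase : IntegrableOn (fun t : ℝ => t ^ (-α)) (Ioi r) :=
      integrableOn_Ioi_rpow_of_lt (by linarith) hr
    refine (hbase.mul_const G).mono' ?_ ?_
    · refine (ContinuousOn.mul ?_ hf'c.continuousOn).aestronglyMeasurable measurableSet_Ioi
      exact fun t ht => (Real.continuousAt_rpow_const t _ (Or.inl (hr.trans ht).ne')).continuousWithinAt
    · filter_upwards [ae_restrict_mem measurableSet_Ioi] with t ht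
      have h0 : (0:ℝ) ≤ t ^ (-α) := Real.rpow_nonneg (hr.trans ht).le _
      rw [Real.norm_eq_abs, abs_mul, abs_of_nonneg h0]
      exact mul_le_mul_of_nonneg_left (hfG t) h0
  -- continuity of f on positives
  have hfc : ∀ t : ℝ, 0 < t → ContinuousAt f t := fun t ht => (hderiv t ht).continuousAt
  -- integrability of A
  have hbase2 : IntegrableOn (fun t : ℝ => t ^ (γ - α - 1)) (Ioi r) :=
    integrableOn_Ioi_rpow_of_lt (by linarith) hr
  have hintA : IntegrableOn (fun t => -α * t ^ (-α - 1) * f t) (Ioi r) := by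
    refine ((hbase2.const_mul (α * H)).mono' ?_ ?_)
    · refine ContinuousOn.aestronglyMeasurable ?_ measurableSet_Ioi
      refine ContinuousOn.mul (ContinuousOn.mul continuousOn_const ?_) ?_
      · exact fun t ht => (Real.continuousAt_rpow_const t _ (Or.inl (hr.trans ht).ne')).continuousWithinAt
      · exact fun t ht => (hfc t (hr.trans ht)).continuousWithinAt
    · filter_upwards [ae_restrict_mem measurableSet_Ioi] with t ht
      have htpos : 0 < t := hr.trans ht
      have h0 : (0:ℝ) ≤ t ^ (-α - 1) := Real.rpow_nonneg htpos.le _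
      rw [Real.norm_eq_abs, abs_mul, abs_mul, abs_of_nonneg h0, abs_neg, abs_of_nonneg (by linarith : (0:ℝ) ≤ α)]
      calc α * t ^ (-α - 1) * |f t| ≤ α * t ^ (-α - 1) * (H * t ^ γ) := by
            apply mul_le_mul_of_nonneg_left (hfH t htpos)
            positivity
        _ = α * H * t ^ (γ - α - 1) := by
            rw [show γ - α - 1 = (-α - 1) + γ by ring, Real.rpow_add htpos]; ring
  -- FTC
  have hF : ∀ t ∈ Ioi r, HasDerivAt (fun t => t ^ (-α) * f t)
      (-α * t ^ (-α - 1) * f t + t ^ (-α) * f' t) t := by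
    intro t ht
    have htpos : 0 < t := hr.trans ht
    have h1 : HasDerivAt (fun t : ℝ => t ^ (-α)) (-α * t ^ (-α - 1)) t := by
      simpa using Real.hasDerivAt_rpow_const (p := -α) (Or.inl htpos.ne')
    exact h1.mul (hderiv t htpos)
  have htend : Tendsto (fun t => t ^ (-α) * f t) atTop (nhds 0) := by
    refine squeeze_zero_norm' (a := fun t => H * t ^ (γ - α)) ?_ ?_
    · filter_upwards [eventually_gt_atTop (0:ℝ)] with t ht
      rw [Real.norm_eq_abs, abs_mul, abs_of_nonneg (Real.rpow_nonneg ht.le _)]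
      calc t ^ (-α) * |f t| ≤ t ^ (-α) * (H * t ^ γ) :=
            mul_le_mul_of_nonneg_left (hfH t ht) (Real.rpow_nonneg ht.le _)
        _ = H * t ^ (γ - α) := by
            rw [show γ - α = -α + γ by ring, Real.rpow_add ht]; ring
    · rw [show (0:ℝ) = H * 0 by ring]
      simpa [neg_sub] using (tendsto_rpow_neg_atTop hαγ).const_mul H
  have hcontr : ContinuousWithinAt (fun t => t ^ (-α) * f t) (Ici r) r := by
    have h1 : HasDerivAt (fun t : ℝ => t ^ (-α)) (-α * r ^ (-α - 1)) r := by
      simpa using Real.hasDerivAt_rpow_const (p := -α) (Or.inl hr.ne')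
    exact (h1.mul (hderiv r hr)).continuousAt.continuousWithinAt
  have hFTC : ∫ t in Ioi r, (-α * t ^ (-α - 1) * f t + t ^ (-α) * f' t) = 0 - r ^ (-α) * f r :=
    integral_Ioi_of_hasDerivAt_of_tendsto hcontr hF (hintA.add hintB) htend
  rw [integral_add hintA hintB] at hFTC
  have hB : ∫ t in Ioi r, t ^ (-α) * f' t
      = -(r ^ (-α) * f r) - ∫ t in Ioi r, -α * t ^ (-α - 1) * f t := by linarith
  -- bound A integral
  have hAbound : |∫ t in Ioi r, -α * t ^ (-α - 1) * f t| ≤ α * H * (r ^ (γ - α) / (α - γ)) := by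
    have h1 : ‖∫ t in Ioi r, -α * t ^ (-α - 1) * f t‖
        ≤ ∫ t in Ioi r, α * H * t ^ (γ - α - 1) := by
      apply norm_integral_le_of_norm_le (hbase2.const_mul (α * H))
      filter_upwards [ae_restrict_mem measurableSet_Ioi] with t ht
      have htpos : 0 < t := hr.trans ht
      have h0 : (0:ℝ) ≤ t ^ (-α - 1) := Real.rpow_nonneg htpos.le _
      rw [Real.norm_eq_abs, abs_mul, abs_mul, abs_of_nonneg h0, abs_neg, abs_of_nonneg (by linarith : (0:ℝ) ≤ α)]
      calc α * t ^ (-α - 1) * |f t| ≤ α * t ^ (-α - 1) * (H * t ^ γ) := by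
            apply mul_le_mul_of_nonneg_left (hfH t htpos)
            positivity
        _ = α * H * t ^ (γ - α - 1) := by
            rw [show γ - α - 1 = (-α - 1) + γ by ring, Real.rpow_add htpos]; ring
    rw [Real.norm_eq_abs] at h1
    refine h1.trans ?_
    rw [MeasureTheory.integral_const_mul, integral_Ioi_rpow_of_lt (by linarith) hr]
    rw [show γ - α - 1 + 1 = γ - α by ring]
    have hne1 : γ - α ≠ 0 := by linarith
    have hne2 : α - γ ≠ 0 := by linarith
    have heq : -r ^ (γ - α) / (γ - α) = r ^ (γ - α) / (α - γ) := by
      field_simp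
      ring
    rw [heq]
  -- bound boundary
  have hbdy : |r ^ (-α) * f r| ≤ H * r ^ (γ - α) := by
    rw [abs_mul, abs_of_nonneg (Real.rpow_nonneg hr.le _)]
    calc r ^ (-α) * |f r| ≤ r ^ (-α) * (H * r ^ γ) :=
          mul_le_mul_of_nonneg_left (hfH r hr) (Real.rpow_nonneg hr.le _)
      _ = H * r ^ (γ - α) := by
          rw [show γ - α = -α + γ by ring, Real.rpow_add hr]; ring
  rw [hB]
  have := abs_sub (-(r ^ (-α) * f r)) (∫ t in Ioi r, -α * t ^ (-α - 1) * f t)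
  calc |(-(r ^ (-α) * f r)) - ∫ t in Ioi r, -α * t ^ (-α - 1) * f t|
      ≤ |(-(r ^ (-α) * f r))| + |∫ t in Ioi r, -α * t ^ (-α - 1) * f t| := abs_sub _ _
    _ ≤ H * r ^ (γ - α) + α * H * (r ^ (γ - α) / (α - γ)) := by
        rw [abs_neg]; exact add_le_add hbdy hAbound
    _ = (1 + α / (α - γ)) * H * r ^ (γ - α) := by field_simp


private lemma integral_volumeIoiPow_my (m : ℕ) (h : ℝ → ℝ) :
    ∫ t : Ioi (0:ℝ), h t ∂(Measure.volumeIoiPow m) = ∫ t in Ioi (0:ℝ), t ^ m • h t := by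
  simp only [Measure.volumeIoiPow, ENNReal.ofReal]
  rw [integral_withDensity_eq_integral_smul
      ((measurable_subtype_coe.pow_const _).real_toNNReal),
    integral_subtype_comap measurableSet_Ioi fun a ↦ Real.toNNReal (a ^ m) • h a,
    setIntegral_congr_fun measurableSet_Ioi fun t ht ↦ ?_]
  rw [NNReal.smul_def, Real.coe_toNNReal _ (pow_nonneg ht.out.le _)]

set_option maxHeartbeats 1000000 in
theorem stmt14 (n : ℕ) (hn : 1 ≤ n) (α γ : ℝ) (hα1 : 1 < α) (hα2 : α < 2)
    (hγ0 : 0 < γ) (hγ1 : γ < 1) :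
    ∃ C : ℝ, 0 < C ∧
      ∀ ρ : EuclideanSpace ℝ (Fin n) → ℝ, ContDiff ℝ 1 ρ →
      ∀ M : ℝ, (∀ y, |ρ y| ≤ M) →
      ∀ G : ℝ, (∀ y, ‖gradient ρ y‖ ≤ G) →
      ∀ H : ℝ, (∀ x y : EuclideanSpace ℝ (Fin n), |ρ x - ρ y| ≤ H * ‖x - y‖ ^ γ) →
      ∀ x : EuclideanSpace ℝ (Fin n), ∀ r : ℝ, 0 < r → r < 1 →
        |∫ z in {z : EuclideanSpace ℝ (Fin n) | r < ‖z‖},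
            ⟪(‖z‖ ^ (-((n : ℝ) + α))) • z, gradient ρ (x + z)⟫| ≤
          C * (G + (M + H) * r ^ (γ - α)) := by
  classical
  haveI : Nonempty (Fin n) := ⟨⟨0, hn⟩⟩
  set E := EuclideanSpace ℝ (Fin n) with hE
  haveI : Nontrivial E := by
    refine ⟨EuclideanSpace.single (⟨0, hn⟩ : Fin n) (1:ℝ), 0, fun h => ?_⟩
    have := congrArg (fun v : E => v (⟨0, hn⟩ : Fin n)) h
    simp at this
  set μ : Measure E := volume with hμ
  set Sph : ℝ := (μ.toSphere Set.univ).toReal with hSph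
  have hSphnn : 0 ≤ Sph := ENNReal.toReal_nonneg
  set K : ℝ := 1 + α / (α - γ) with hK
  have hαγ : 0 < α - γ := by linarith
  have hKpos : 0 < K := by positivity
  refine ⟨K * Sph + 1, by positivity, ?_⟩
  intro ρ hρ M hM G hG H hHo x r hr hr1
  have hG0 : 0 ≤ G := le_trans (norm_nonneg _) (hG x)
  have hM0 : 0 ≤ M := le_trans (abs_nonneg _) (hM x)
  have hH0 : 0 ≤ H := by
    have h2 := hHo (x + EuclideanSpace.single (⟨0, hn⟩ : Fin n) (1:ℝ)) x
    rw [add_sub_cancel_left] at h2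
    have h3 : ‖EuclideanSpace.single (⟨0, hn⟩ : Fin n) (1:ℝ)‖ = 1 := by
      simp [EuclideanSpace.norm_single]
    rw [h3, Real.one_rpow, mul_one] at h2
    exact le_trans (abs_nonneg _) h2
  have hR : 0 < r ^ (γ - α) := Real.rpow_pos_of_pos hr _
  -- gradient is continuous
  have hgradc : Continuous (gradient ρ) := by
    have h1 : Continuous (fderiv ℝ ρ) := hρ.continuous_fderiv one_ne_zero
    exact (InnerProductSpace.toDual ℝ E).symm.continuous.comp h1
  -- the set and integrand
  set S : Set E := {z : E | r < ‖z‖} with hS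
  have hSmeas : MeasurableSet S := (isOpen_lt continuous_const continuous_norm).measurableSet
  set s : E → ℝ := fun z => ⟪(‖z‖ ^ (-((n : ℝ) + α))) • z, gradient ρ (x + z)⟫ with hs
  set ind : E → ℝ := S.indicator s with hind
  -- continuity of s on S
  have hscont : ContinuousOn s S := by
    apply ContinuousOn.inner
    · exact ContinuousOn.smul
        (continuous_norm.continuousOn.rpow_const
          (fun z hz => Or.inl (ne_of_gt (lt_trans hr hz))))
        continuousOn_id
    · exact (hgradc.comp (continuous_const.add continuous_id)).continuousOn
  -- integrability of s on S
  set β : ℝ := (n : ℝ) + α - 1 with hβdef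
  have hβ0 : 0 ≤ β := by
    have : (1:ℝ) ≤ (n:ℝ) := by exact_mod_cast hn
    simp only [hβdef]; linarith
  have hβ : (Module.finrank ℝ E : ℝ) < β := by
    rw [finrank_euclideanSpace_fin]; simp only [hβdef]; linarith
  set Q : ℝ := (1 + r) / r with hQ
  have hQpos : 0 < Q := by positivity
  have hdom : ∀ z ∈ S, ‖s z‖ ≤ (G * Q ^ β) * (1 + ‖z‖) ^ (-β) := by
    intro z hz
    have ht : r < ‖z‖ := hz
    have ht0 : (0:ℝ) < ‖z‖ := lt_trans hr ht
    have h1t : (0:ℝ) < 1 + ‖z‖ := by positivity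
    have hker : ‖(‖z‖ ^ (-((n : ℝ) + α))) • z‖ = ‖z‖ ^ (-β) := by
      rw [norm_smul, Real.norm_eq_abs, abs_of_nonneg (Real.rpow_nonneg (norm_nonneg z) _)]
      nth_rewrite 2 [show ‖z‖ = ‖z‖ ^ (1:ℝ) from (Real.rpow_one _).symm]
      rw [← Real.rpow_add ht0]
      congr 1
      simp only [hβdef]; ring
    calc ‖s z‖ ≤ ‖(‖z‖ ^ (-((n : ℝ) + α))) • z‖ * ‖gradient ρ (x + z)‖ := by
          simpa only [hs, Real.norm_eq_abs] using abs_real_inner_le_norm _ _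
      _ ≤ ‖z‖ ^ (-β) * G := by
          rw [hker]
          exact mul_le_mul_of_nonneg_left (hG _) (Real.rpow_nonneg (norm_nonneg z) _)
      _ ≤ (G * Q ^ β) * (1 + ‖z‖) ^ (-β) := by
          have h2 : 1 + ‖z‖ ≤ Q * ‖z‖ := by
            rw [hQ, div_mul_eq_mul_div, le_div_iff₀ hr]
            nlinarith
          have h3 : (1 + ‖z‖) ^ β ≤ Q ^ β * ‖z‖ ^ β := by
            rw [← Real.mul_rpow hQpos.le (norm_nonneg z)]
            exact Real.rpow_le_rpow h1t.le h2 hβ0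
          have h4 : (0:ℝ) < ‖z‖ ^ β := Real.rpow_pos_of_pos ht0 _
          have h5 : (0:ℝ) < (1 + ‖z‖) ^ β := Real.rpow_pos_of_pos h1t _
          have e1 : ‖z‖ ^ (-β) * G = G / ‖z‖ ^ β := by
            rw [Real.rpow_neg ht0.le]; ring
          have e2 : (G * Q ^ β) * (1 + ‖z‖) ^ (-β) = (G * Q ^ β) / (1 + ‖z‖) ^ β := by
            rw [Real.rpow_neg h1t.le]; ring
          rw [e1, e2, div_le_div_iff₀ h4 h5]
          nlinarith [h3, mul_le_mul_of_nonneg_left h3 hG0]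
  -- integrability
  have hint0 : Integrable (fun z : E => (G * Q ^ β) * ((1 + ‖z‖) ^ (-β))) μ :=
    (integrable_one_add_norm hβ).const_mul _
  have hIntS : IntegrableOn s S μ := by
    refine Integrable.mono' hint0.integrableOn (hscont.aestronglyMeasurable hSmeas) ?_
    filter_upwards [ae_restrict_mem hSmeas] with z hz using hdom z hz
  have hIndInt : Integrable ind μ := (integrable_indicator_iff hSmeas).2 hIntS
  -- polar coordinates
  set e := homeomorphUnitSphereProd E with he
  set ν := μ.toSphere.prod (Measure.volumeIoiPow (Module.finrank ℝ E - 1)) with hν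
  set g : sphere (0:E) 1 × Ioi (0:ℝ) → ℝ := fun p => ind ((p.2 : ℝ) • (p.1 : E)) with hg
  have hcomp : ∀ y : ({0}ᶜ : Set E), g (e y) = ind y.1 := by
    intro y
    have hy : y.1 ≠ 0 := y.2
    simp only [hg, he, homeomorphUnitSphereProd_apply_snd_coe,
      homeomorphUnitSphereProd_apply_fst_coe]
    rw [smul_smul, mul_inv_cancel₀ (norm_ne_zero_iff.2 hy), one_smul]
  have hemb := MeasurableEmbedding.subtype_coe (measurableSet_singleton (0:E)).compl
  have eq1 : ∫ z, ind z ∂μ = ∫ y : ({0}ᶜ : Set E), ind y.1 ∂(μ.comap Subtype.val) := by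
    rw [integral_subtype_comap (measurableSet_singleton (0:E)).compl,
      MeasureTheory.restrict_compl_singleton]
  have eq2' := (μ.measurePreserving_homeomorphUnitSphereProd).integral_comp
      (Homeomorph.measurableEmbedding e) g
  have eq2 : ∫ y : ({0}ᶜ : Set E), ind y.1 ∂(μ.comap Subtype.val) = ∫ p, g p ∂ν := by
    rw [← eq2']
    exact integral_congr_ae (Eventually.of_forall fun y => (hcomp y).symm)
  have h1 : Integrable (fun y : ({0}ᶜ : Set E) => ind y.1) (μ.comap Subtype.val) := by
    have h2 : Integrable ind (Measure.map ((↑) : ({0}ᶜ : Set E) → E) (μ.comap (↑))) := by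
      rw [hemb.map_comap, Subtype.range_coe, MeasureTheory.restrict_compl_singleton]
      exact hIndInt
    exact (hemb.integrable_map_iff).1 h2
  have hgInt : Integrable g ν := by
    have h3 : Integrable (g ∘ e) (μ.comap Subtype.val) := by
      have hfe : (g ∘ e) = fun y : ({0}ᶜ : Set E) => ind y.1 := funext hcomp
      rw [hfe]; exact h1
    exact ((μ.measurePreserving_homeomorphUnitSphereProd).integrable_comp_emb
      (Homeomorph.measurableEmbedding e)).1 h3
  have eq4 : ∫ p, g p ∂ν = ∫ ω, (∫ t : Ioi (0:ℝ), g (ω, t)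
      ∂(Measure.volumeIoiPow (Module.finrank ℝ E - 1))) ∂μ.toSphere :=
    integral_prod g hgInt
  have hdim : Module.finrank ℝ E - 1 = n - 1 := by rw [finrank_euclideanSpace_fin]
  -- per direction computation
  have key : ∀ ω : sphere (0:E) 1,
      (∫ t : Ioi (0:ℝ), g (ω, t) ∂(Measure.volumeIoiPow (Module.finrank ℝ E - 1)))
        = ∫ t in Ioi r, t ^ (-α) * ⟪(ω:E), gradient ρ (x + t • (ω:E))⟫ := by
    intro ω
    have hnorm : ∀ t : ℝ, 0 < t → ‖t • (ω:E)‖ = t := by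
      intro t ht
      rw [norm_smul, mem_sphere_zero_iff_norm.1 ω.2, mul_one, Real.norm_eq_abs, abs_of_pos ht]
    rw [hdim]
    have h0 := integral_volumeIoiPow_my (n-1) (fun u => ind (u • (ω:E)))
    calc (∫ t : Ioi (0:ℝ), g (ω, t) ∂(Measure.volumeIoiPow (n - 1)))
        = ∫ t : Ioi (0:ℝ), ind ((t:ℝ) • (ω:E)) ∂(Measure.volumeIoiPow (n - 1)) := rfl
      _ = ∫ t in Ioi (0:ℝ), t ^ (n-1) • ind (t • (ω:E)) := h0
      _ = ∫ t in Ioi (0:ℝ), (Ioi r).indicator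
            (fun u => u ^ (-α) * ⟪(ω:E), gradient ρ (x + u • (ω:E))⟫) t := by
          refine setIntegral_congr_fun measurableSet_Ioi fun t ht => ?_
          have ht0 : (0:ℝ) < t := ht
          by_cases htr : r < t
          · have htS : t • (ω:E) ∈ S := by
              simp only [hS, Set.mem_setOf_eq, hnorm t ht0]; exact htr
            rw [Set.indicator_of_mem (Set.mem_Ioi.2 htr), hind, Set.indicator_of_mem htS, hs]
            simp only [hnorm t ht0]
            rw [real_inner_smul_left, real_inner_smul_left, smul_eq_mul]
            have hc1 : ((n-1:ℕ):ℝ) = (n:ℝ) - 1 := by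
              push_cast [Nat.cast_sub hn]; ring
            have hpow : (t:ℝ)^(n-1:ℕ) * t ^ (-((n:ℝ)+α)) * t = t ^ (-α) := by
              rw [← Real.rpow_natCast t (n-1), hc1, ← Real.rpow_add ht0,
                ← Real.rpow_add_one ht0.ne']
              congr 1; ring
            calc (t:ℝ)^(n-1:ℕ) * (t ^ (-((n:ℝ)+α)) * (t * ⟪(ω:E), gradient ρ (x + t • (ω:E))⟫))
                = ((t:ℝ)^(n-1:ℕ) * t ^ (-((n:ℝ)+α)) * t) * ⟪(ω:E), gradient ρ (x + t • (ω:E))⟫ := by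
                  ring
              _ = t ^ (-α) * ⟪(ω:E), gradient ρ (x + t • (ω:E))⟫ := by rw [hpow]
          · have htS : t • (ω:E) ∉ S := by
              simp only [hS, Set.mem_setOf_eq, hnorm t ht0]; exact htr
            rw [Set.indicator_of_notMem (fun h => htr (Set.mem_Ioi.1 h)), hind, Set.indicator_of_notMem htS, smul_zero]
      _ = ∫ t in Ioi r, t ^ (-α) * ⟪(ω:E), gradient ρ (x + t • (ω:E))⟫ := by
          rw [integral_indicator measurableSet_Ioi, Measure.restrict_restrict measurableSet_Ioi,
            Set.Ioi_inter_Ioi, sup_eq_left.2 hr.le]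
  -- the 1D bound for each direction
  have hbound : ∀ ω : sphere (0:E) 1,
      |∫ t in Ioi r, t ^ (-α) * ⟪(ω:E), gradient ρ (x + t • (ω:E))⟫| ≤ K * H * r ^ (γ - α) := by
    intro ω
    have hω1 : ‖(ω:E)‖ = 1 := mem_sphere_zero_iff_norm.1 ω.2
    refine oneD hα1 hγ0 (by linarith) hr (fun t => ρ (x + t • (ω:E)) - ρ x)
      (fun t => ⟪(ω:E), gradient ρ (x + t • (ω:E))⟫) ?_ ?_ (G := G) ?_ ?_
    · intro t ht
      have hc : HasDerivAt (fun u : ℝ => x + u • (ω:E)) ((ω:E)) t := by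
        simpa using ((hasDerivAt_id t).smul_const (ω:E)).const_add x
      have hd1 : HasDerivAt (fun u : ℝ => ρ (x + u • (ω:E)))
          (fderiv ℝ ρ (x + t • (ω:E)) (ω:E)) t :=
        ((hρ.differentiable one_ne_zero) (x + t • (ω:E))).hasFDerivAt.comp_hasDerivAt t hc
      have heq : fderiv ℝ ρ (x + t • (ω:E)) (ω:E) = ⟪(ω:E), gradient ρ (x + t • (ω:E))⟫ := by
        rw [real_inner_comm]
        simp [gradient, InnerProductSpace.toDual_symm_apply]
      rw [heq] at hd1
      exact hd1.sub_const (ρ x)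
    · intro t ht
      have h2 := hHo (x + t • (ω:E)) x
      rwa [add_sub_cancel_left, norm_smul, hω1, mul_one, Real.norm_eq_abs, abs_of_pos ht] at h2
    · intro t
      refine (abs_real_inner_le_norm _ _).trans ?_
      rw [hω1, one_mul]; exact hG _
    · exact continuous_const.inner (hgradc.comp (continuous_const.add
        (continuous_id.smul continuous_const)))
  -- put everything together
  have hIeq : (∫ z in S, s z ∂μ) = ∫ ω, (∫ t in Ioi r,
      t ^ (-α) * ⟪(ω:E), gradient ρ (x + t • (ω:E))⟫) ∂μ.toSphere := by
    rw [← integral_indicator hSmeas, ← hind, eq1, eq2, eq4]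
    exact integral_congr_ae (Eventually.of_forall fun ω => key ω)
  rw [hIeq]
  have hfin : ‖∫ ω, (∫ t in Ioi r,
      t ^ (-α) * ⟪(ω:E), gradient ρ (x + t • (ω:E))⟫) ∂μ.toSphere‖
      ≤ (K * H * r ^ (γ - α)) * Sph := by
    rw [hSph]
    refine norm_integral_le_of_norm_le_const ?_
    exact Eventually.of_forall fun ω => by
      rw [Real.norm_eq_abs]; exact hbound ω
  rw [Real.norm_eq_abs] at hfin
  refine hfin.trans ?_
  nlinarith [mul_nonneg hM0 hR.le, mul_nonneg hH0 hR.le, mul_nonneg (mul_nonneg hKpos.le hSphnn)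
    (mul_nonneg hM0 hR.le), mul_nonneg (mul_nonneg hKpos.le hSphnn) hG0,
    mul_nonneg hH0 hR.le, mul_nonneg (mul_nonneg hKpos.le hSphnn) (mul_nonneg hH0 hR.le)]
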